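/- (Lemma 2) Let B be a real n×m matrix, C a real m×n matrix, Δ ∈ ℝ^m, and let J₂, J₄ be real symmetric n×n matrices. Write J(κ) = B·diag(Δ)·C + κ² J₂ + κ⁴ J₄. Assume that the characteristic polynomial of B·diag(Δ)·C has 0 as a root of multiplicity exactly one and that all its other complex roots have negative real part. If the function κ ↦ det(−J(κ)) is initially positive (i.e., there exists κ̂ > 0 with det(−J(κ)) > 0 for all κ ∈ (0, κ̂)), then there exists κ̃ > 0 such that for every κ with 0 < κ ≤ κ̃, every eigenvalue of J(κ) has negative real part. -/

import Mathlib

open Matrix Polynomial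

namespace Stmt8Aux

lemma eval_charpoly' {n : ℕ} (M : Matrix (Fin n) (Fin n) ℝ) (r : ℝ) :
    M.charpoly.eval r = (r • (1 : Matrix (Fin n) (Fin n) ℝ) - M).det := by
  rw [Matrix.charpoly, ← Polynomial.coe_evalRingHom, RingHom.map_det]
  congr 1
  ext i j
  by_cases h : i = j
  · subst h; simp [charmatrix_apply_eq, Matrix.smul_apply, Matrix.one_apply]
  · simp [charmatrix_apply_ne _ _ _ h, Matrix.smul_apply, Matrix.one_apply_ne h]

lemma continuous_coeff_charpoly {n : ℕ} {J : ℝ → Matrix (Fin n) (Fin n) ℝ}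
    (hJ : Continuous J) (k : ℕ) :
    Continuous fun κ => ((J κ).charpoly).coeff k := by
  classical
  set s : Finset ℝ := (Finset.range (n+1)).image (Nat.cast) with hs
  have hcard : s.card = n + 1 := by
    rw [hs, Finset.card_image_of_injective _ Nat.cast_injective, Finset.card_range]
  have hinj : Set.InjOn id (s : Set ℝ) := Function.injective_id.injOn
  have hdeg : ∀ κ : ℝ, ((J κ).charpoly).degree < (s.card : ℕ) := by
    intro κ
    rw [hcard]
    refine lt_of_le_of_lt degree_le_natDegree ?_
    rw [Matrix.charpoly_natDegree_eq_dim, Fintype.card_fin]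
    exact_mod_cast Nat.cast_lt.mpr (Nat.lt_succ_self n)
  have key : ∀ κ : ℝ, ((J κ).charpoly).coeff k
      = ∑ x ∈ s, ((x • (1 : Matrix (Fin n) (Fin n) ℝ) - J κ).det) *
          (Lagrange.basis s id x).coeff k := by
    intro κ
    conv_lhs => rw [Lagrange.eq_interpolate hinj (hdeg κ)]
    rw [Lagrange.interpolate_apply, finset_sum_coeff]
    refine Finset.sum_congr rfl fun x hx => ?_
    rw [coeff_C_mul, id, eval_charpoly']
  simp only [key]
  exact continuous_finset_sum _ fun x _ =>
    ((continuous_const.sub hJ).matrix_det).mul continuous_const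

lemma prod_bounds {B : ℝ} (hB : 1 ≤ B) (S : Multiset ℂ) (h : ∀ r ∈ S, ‖r‖ ≤ B) :
    ‖((S.map (fun r => X - C r)).prod).eval 0‖ ≤ B ^ Multiset.card S ∧
    ‖(derivative ((S.map (fun r => X - C r)).prod)).eval 0‖
      ≤ (Multiset.card S) * B ^ Multiset.card S := by
  induction S using Multiset.induction_on with
  | empty => simp
  | cons a S ih =>
    obtain ⟨h0, h1⟩ := ih (fun r hr => h r (Multiset.mem_cons_of_mem hr))
    have ha : ‖a‖ ≤ B := h a (Multiset.mem_cons_self _ _)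
    have hBpos : (0:ℝ) < B := lt_of_lt_of_le one_pos hB
    have hpow : B ^ Multiset.card S ≤ B ^ (Multiset.card S + 1) :=
      pow_le_pow_right₀ hB (Nat.le_succ _)
    have hpowpos : (0:ℝ) < B ^ Multiset.card S := pow_pos hBpos _
    have hann : (0:ℝ) ≤ ‖a‖ := norm_nonneg _
    have hcnn : (0:ℝ) ≤ (Multiset.card S : ℝ) := Nat.cast_nonneg _
    simp only [Multiset.map_cons, Multiset.prod_cons, Multiset.card_cons]
    have he : ‖eval 0 (X - C a)‖ = ‖a‖ := by simp
    constructor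
    · rw [eval_mul, norm_mul, he, pow_succ]
      calc ‖a‖ * ‖eval 0 (Multiset.map (fun r => X - C r) S).prod‖
          ≤ B * B ^ Multiset.card S :=
            mul_le_mul ha h0 (norm_nonneg _) (le_of_lt hBpos)
        _ = B ^ Multiset.card S * B := by ring
    · rw [derivative_mul, derivative_X_sub_C, one_mul, eval_add, eval_mul]
      refine le_trans (norm_add_le _ _) ?_
      rw [norm_mul, he]
      have h2 : ‖a‖ * ‖eval 0 (derivative (Multiset.map (fun r => X - C r) S).prod)‖
          ≤ B * ((Multiset.card S) * B ^ Multiset.card S) :=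
        mul_le_mul ha h1 (norm_nonneg _) (le_of_lt hBpos)
      have h3 : ‖eval 0 (Multiset.map (fun r => X - C r) S).prod‖ ≤ B ^ Multiset.card S := h0
      push_cast
      rw [pow_succ]
      nlinarith

lemma prod_lower {δ : ℝ} (hδ : 0 ≤ δ) (z : ℂ) (S : Multiset ℂ)
    (h : ∀ r ∈ S, δ ≤ ‖z - r‖) :
    δ ^ Multiset.card S ≤ ‖((S.map (fun r => X - C r)).prod).eval z‖ := by
  induction S using Multiset.induction_on with
  | empty => simp
  | cons a S ih =>
    have h0 := ih (fun r hr => h r (Multiset.mem_cons_of_mem hr))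
    have ha : δ ≤ ‖z - a‖ := h a (Multiset.mem_cons_self _ _)
    simp only [Multiset.map_cons, Multiset.prod_cons, Multiset.card_cons]
    rw [eval_mul, norm_mul, pow_succ]
    have he : ‖eval z (X - C a)‖ = ‖z - a‖ := by simp
    rw [he]
    calc δ ^ Multiset.card S * δ ≤ ‖eval z (Multiset.map (fun r => X - C r) S).prod‖ * ‖z - a‖ :=
          mul_le_mul h0 ha hδ (norm_nonneg _)
      _ = ‖z - a‖ * ‖eval z (Multiset.map (fun r => X - C r) S).prod‖ := by ring

lemma pos_of_no_nonneg_root {g : ℝ[X]} (hg : g.Monic) (h : ∀ s : ℝ, 0 ≤ s → ¬ g.IsRoot s) :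
    0 < g.eval 0 := by
  rcases Nat.eq_zero_or_pos g.natDegree with h0 | h0
  · rw [hg.natDegree_eq_zero.mp h0]; simp
  · have hdeg : 0 < g.degree := natDegree_pos_iff_degree_pos.mp h0
    have htend := g.tendsto_atTop_of_leadingCoeff_nonneg hdeg (by rw [hg.leadingCoeff]; norm_num)
    obtain ⟨T, hT1, hT0⟩ := ((htend.eventually_ge_atTop 1).and (Filter.eventually_ge_atTop 0)).exists
    by_contra hcon
    push_neg at hcon
    have hne : g.eval 0 ≠ 0 := h 0 le_rfl
    have hlt : g.eval 0 < 0 := lt_of_le_of_ne hcon hne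
    have := intermediate_value_Icc hT0 (g.continuous.continuousOn (s := Set.Icc 0 T))
    have hmem : (0:ℝ) ∈ Set.Icc (g.eval 0) (g.eval T) := ⟨le_of_lt hlt, le_trans zero_le_one hT1⟩
    obtain ⟨s, hs, hgs⟩ := this hmem
    exact h s hs.1 hgs

lemma conj_root {p : ℝ[X]} {z : ℂ} (h : (p.map (algebraMap ℝ ℂ)).IsRoot z) :
    (p.map (algebraMap ℝ ℂ)).IsRoot ((starRingEnd ℂ) z) := by
  have h' : aeval z p = 0 := by rwa [aeval_def, ← eval_map]
  have h2 := Polynomial.aeval_conj (K := ℂ) p z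
  rw [IsRoot, eval_map, ← aeval_def, h2, h', map_zero]

lemma eval_ofReal (p : ℝ[X]) (t : ℝ) :
    (p.map (algebraMap ℝ ℂ)).eval (t : ℂ) = ((p.eval t : ℝ) : ℂ) := by
  have : ((t : ℂ)) = algebraMap ℝ ℂ t := rfl
  rw [eval_map, this, eval₂_at_apply]
  rfl

lemma root_norm_le {q : ℂ[X]} (hq : q.Monic) {z : ℂ} (hz : q.IsRoot z) :
    ‖z‖ ≤ 1 + ∑ i ∈ Finset.range q.natDegree, ‖q.coeff i‖ := by
  have h1 := hz.norm_lt_cauchyBound hq.ne_zero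
  have hsup : (Finset.range q.natDegree).sup (fun i => ‖q.coeff i‖₊)
      ≤ ∑ i ∈ Finset.range q.natDegree, ‖q.coeff i‖₊ :=
    Finset.sup_le fun i hi => Finset.single_le_sum (f := fun i => ‖q.coeff i‖₊) (fun j _ => zero_le) hi
  have h2 : (cauchyBound q : ℝ) ≤ 1 + ∑ i ∈ Finset.range q.natDegree, ‖q.coeff i‖ := by
    rw [cauchyBound, hq.leadingCoeff]
    simp only [nnnorm_one, div_one]
    push_cast
    have := NNReal.coe_le_coe.mpr hsup
    rw [NNReal.coe_sum] at this
    simp only [coe_nnnorm] at this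
    linarith
  calc ‖z‖ = (‖z‖₊ : ℝ) := rfl
    _ ≤ (cauchyBound q : ℝ) := le_of_lt (by exact_mod_cast h1)
    _ ≤ _ := h2

end Stmt8Aux


set_option maxHeartbeats 1000000 in
/-- (Lemma 2) Write `J(κ) = B ⬝ diag(Δ) ⬝ C + κ² J₂ + κ⁴ J₄`, with `J₂, J₄` real
symmetric.  Assume that the characteristic polynomial of `B ⬝ diag(Δ) ⬝ C` has `0`
as a root of multiplicity exactly one and all its other complex roots have negative
real part.  If `κ ↦ det (-J(κ))` is initially positive, then there is `κ̃ > 0` such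
that for all `0 < κ ≤ κ̃` every eigenvalue of `J(κ)` has negative real part. -/
theorem stmt8 (n m : ℕ) (B : Matrix (Fin n) (Fin m) ℝ) (C : Matrix (Fin m) (Fin n) ℝ)
    (Δ : Fin m → ℝ) (J2 J4 : Matrix (Fin n) (Fin n) ℝ)
    (hJ2 : J2.IsSymm) (hJ4 : J4.IsSymm)
    (hmult : (((B * Matrix.diagonal Δ * C).charpoly).map
        (algebraMap ℝ ℂ)).rootMultiplicity 0 = 1)
    (hroots : ∀ z : ℂ, (((B * Matrix.diagonal Δ * C).charpoly).map
        (algebraMap ℝ ℂ)).IsRoot z → z ≠ 0 → z.re < 0)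
    (hpos : ∃ κhat : ℝ, 0 < κhat ∧ ∀ κ : ℝ, 0 < κ → κ < κhat →
      0 < (-(B * Matrix.diagonal Δ * C + κ ^ 2 • J2 + κ ^ 4 • J4)).det) :
    ∃ κtil : ℝ, 0 < κtil ∧ ∀ κ : ℝ, 0 < κ → κ ≤ κtil → ∀ μ : ℂ,
      (((B * Matrix.diagonal Δ * C + κ ^ 2 • J2 + κ ^ 4 • J4).charpoly).map
        (algebraMap ℝ ℂ)).IsRoot μ → μ.re < 0 := by
  classical
  obtain ⟨κhat, hκhat, hdet⟩ := hpos
  set A : Matrix (Fin n) (Fin n) ℝ := B * Matrix.diagonal Δ * C with hA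
  set Jf : ℝ → Matrix (Fin n) (Fin n) ℝ := fun κ => A + κ ^ 2 • J2 + κ ^ 4 • J4 with hJf
  set p : ℝ → ℝ[X] := fun κ => (Jf κ).charpoly with hpdef
  set P : ℝ → ℂ[X] := fun κ => (p κ).map (algebraMap ℝ ℂ) with hPdef
  have hJfeq : ∀ κ : ℝ, A + κ ^ 2 • J2 + κ ^ 4 • J4 = Jf κ := fun κ => by rw [hJf]
  have hJf0 : Jf 0 = A := by rw [hJf]; norm_num
  have hp0 : p 0 = A.charpoly := by rw [hpdef]; simp only [hJf0]
  have hP0 : P 0 = (A.charpoly).map (algebraMap ℝ ℂ) := by rw [hPdef]; simp only [hp0]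
  rw [← hP0] at hmult
  have hroots' : ∀ z : ℂ, (P 0).IsRoot z → z ≠ 0 → z.re < 0 := by
    intro z hz; exact hroots z (by rwa [← hP0])
  have hmonic : ∀ κ : ℝ, (p κ).Monic := by
    intro κ; rw [hpdef]; exact Matrix.charpoly_monic _
  have hPmonic : ∀ κ : ℝ, (P κ).Monic := by
    intro κ; rw [hPdef]; exact (hmonic κ).map _
  have hPne : ∀ κ : ℝ, P κ ≠ 0 := fun κ => (hPmonic κ).ne_zero
  have hndeg : ∀ κ : ℝ, (p κ).natDegree = n := by
    intro κ; rw [hpdef]; simp only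
    rw [Matrix.charpoly_natDegree_eq_dim, Fintype.card_fin]
  have hPdeg : ∀ κ : ℝ, (P κ).natDegree = n := by
    intro κ; rw [hPdef]; simp only
    rw [(hmonic κ).natDegree_map]; exact hndeg κ
  have hsplits : ∀ κ : ℝ, (P κ).Splits := fun κ => IsAlgClosed.splits _
  have hcard : ∀ κ : ℝ, Multiset.card (P κ).roots = n := by
    intro κ; rw [← hPdeg κ]; exact (splits_iff_card_roots.mp (hsplits κ))
  have hfact : ∀ κ : ℝ, P κ = ((P κ).roots.map fun a => X - Polynomial.C a).prod := fun κ =>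
    (hsplits κ).eq_prod_roots_of_monic (hPmonic κ)
  have hn : 0 < n := by
    rcases Nat.eq_zero_or_pos n with h | h
    · exfalso
      have h1 : (P 0) = 1 := by
        have : (P 0).natDegree = 0 := by rw [hPdeg 0, h]
        exact (hPmonic 0).natDegree_eq_zero.mp this
      rw [h1] at hmult
      have : rootMultiplicity (0:ℂ) (1:ℂ[X]) = 0 :=
        rootMultiplicity_eq_zero (by simp [IsRoot])
      omega
    · exact h
  -- zero is a simple root of p 0
  have hroot0 : (P 0).IsRoot 0 := by
    have h1 : 0 < rootMultiplicity (0:ℂ) (P 0) := by omega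
    exact (rootMultiplicity_pos (hPne 0)).mp h1
  have hc00 : (p 0).coeff 0 = 0 := by
    have h1 : (P 0).eval 0 = 0 := hroot0
    rw [← coeff_zero_eq_eval_zero] at h1
    rw [hPdef] at h1; simp only [coeff_map] at h1
    have h2 : (((p 0).coeff 0 : ℝ) : ℂ) = 0 := h1
    exact_mod_cast h2
  obtain ⟨g, hgeq⟩ : (X : ℝ[X]) ∣ p 0 := X_dvd_iff.mpr hc00
  have hgmonic : g.Monic := (monic_X).of_mul_monic_left (by rw [← hgeq]; exact hmonic 0)
  have hgroots : ∀ s : ℝ, 0 ≤ s → ¬ g.IsRoot s := by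
    intro s hs hgs
    have hps : (p 0).IsRoot s := by
      rw [IsRoot, hgeq, eval_mul, hgs.eq_zero, mul_zero]
    have hPs : (P 0).IsRoot (s:ℂ) := by
      rw [IsRoot, hPdef]; simp only
      rw [Stmt8Aux.eval_ofReal]
      exact_mod_cast hps
    rcases eq_or_ne s 0 with h0 | h0
    · subst h0
      obtain ⟨g2, hg2⟩ : (X:ℝ[X]) ∣ g := X_dvd_iff.mpr (by
        rw [coeff_zero_eq_eval_zero]; exact hgs)
      have hdvd : (X:ℝ[X])^2 ∣ p 0 := ⟨g2, by rw [hgeq, hg2]; ring⟩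
      have hdvdC : (X:ℂ[X])^2 ∣ P 0 := by
        have h2 := map_dvd (mapRingHom (algebraMap ℝ ℂ)) hdvd
        rw [hPdef]; simp only
        simpa using h2
      have h2m : 2 ≤ rootMultiplicity (0:ℂ) (P 0) := by
        rw [le_rootMultiplicity_iff (hPne 0)]
        simpa using hdvdC
      omega
    · have := hroots' _ hPs (by exact_mod_cast h0)
      rw [Complex.ofReal_re] at this
      linarith
  have hb0pos : 0 < g.eval 0 := Stmt8Aux.pos_of_no_nonneg_root hgmonic hgroots
  set b0 : ℝ := g.eval 0 with hb0
  have hb0c : (p 0).coeff 1 = b0 := by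
    rw [hgeq, coeff_X_mul, coeff_zero_eq_eval_zero]
  -- the gap constant c
  have hcex : ∃ c : ℝ, 0 < c ∧ ∀ r ∈ (P 0).roots, r ≠ 0 → r.re ≤ -c := by
    set F0 := ((P 0).roots.toFinset.erase 0) with hF0
    by_cases hF : F0.Nonempty
    · set cset := F0.image fun r => -r.re with hcset
      have hcne : cset.Nonempty := hF.image _
      refine ⟨cset.min' hcne, ?_, ?_⟩
      · obtain ⟨r, hr, hre⟩ := Finset.mem_image.mp (cset.min'_mem hcne)
        have hr0 : r ≠ 0 := (Finset.mem_erase.mp hr).1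
        have hrR : r ∈ (P 0).roots := Multiset.mem_toFinset.mp (Finset.mem_erase.mp hr).2
        have := hroots' r (mem_roots'.mp hrR).2 hr0
        rw [← hre]; linarith
      · intro r hr hr0
        have hm : -r.re ∈ cset := Finset.mem_image_of_mem _
          (Finset.mem_erase.mpr ⟨hr0, Multiset.mem_toFinset.mpr hr⟩)
        have := Finset.min'_le _ _ hm
        linarith
    · refine ⟨1, one_pos, fun r hr hr0 => ?_⟩
      exact absurd ⟨r, Finset.mem_erase.mpr ⟨hr0, Multiset.mem_toFinset.mpr hr⟩⟩ hF
  obtain ⟨c, hcpos, hc⟩ := hcex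
  -- the coefficient bound Bb
  set Bb : ℝ := 1 + ∑ i ∈ Finset.range n, (|(p 0).coeff i| + 1) with hBb
  have hB1 : 1 ≤ Bb := by
    have : (0:ℝ) ≤ ∑ i ∈ Finset.range n, (|(p 0).coeff i| + 1) :=
      Finset.sum_nonneg fun i _ => by positivity
    rw [hBb]; linarith
  have hBpos : (0:ℝ) < Bb := lt_of_lt_of_le one_pos hB1
  have hBnpos : (0:ℝ) < Bb ^ n := pow_pos hBpos n
  -- δ and ε
  set δ : ℝ := min (min (c/2) 1) (b0 / (8 * (2 + n) * Bb ^ n)) with hδdef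
  have hδpos : 0 < δ := by
    refine lt_min (lt_min (by linarith) one_pos) ?_
    have hd : (0:ℝ) < 8 * (2 + n) * Bb ^ n := mul_pos (mul_pos (by norm_num) (by linarith [(Nat.cast_nonneg n : (0:ℝ) ≤ n)])) hBnpos
    exact div_pos hb0pos hd
  have hδc : δ ≤ c/2 := le_trans (min_le_left _ _) (min_le_left _ _)
  have hδ1 : δ ≤ 1 := le_trans (min_le_left _ _) (min_le_right _ _)
  have hδb : δ * ((2 + n) * Bb ^ n) ≤ b0 / 8 := by
    have h1 : δ ≤ b0 / (8 * (2 + n) * Bb ^ n) := min_le_right _ _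
    have h2 : (0:ℝ) < (2 + n) * Bb ^ n := mul_pos (by linarith [(Nat.cast_nonneg n : (0:ℝ) ≤ n)]) hBnpos
    have h3 := mul_le_mul_of_nonneg_right h1 (le_of_lt h2)
    have h4 : b0 / (8 * (2 + n) * Bb ^ n) * ((2 + n) * Bb ^ n) = b0 / 8 := by
      field_simp
    linarith
  set ε : ℝ := min (min (δ^n / (2 * Bb ^ n)) (b0/4)) 1 with hεdef
  have hεpos : 0 < ε := by
    refine lt_min (lt_min ?_ (by linarith)) one_pos
    exact div_pos (pow_pos hδpos n) (by linarith)
  have hεδ : ε ≤ δ^n / (2 * Bb ^ n) := le_trans (min_le_left _ _) (min_le_left _ _)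
  have hεb : ε ≤ b0/4 := le_trans (min_le_left _ _) (min_le_right _ _)
  have hε1 : ε ≤ 1 := min_le_right _ _
  -- continuity
  have hJcont : Continuous Jf := by
    rw [hJf]
    refine (continuous_const.add ?_).add ?_
    · exact (continuous_pow 2).smul continuous_const
    · exact (continuous_pow 4).smul continuous_const
  set ggap : ℝ → ℝ := fun κ => ∑ i ∈ Finset.range (n+1), |(p κ).coeff i - (p 0).coeff i|
    with hgg
  have hggnonneg : ∀ κ, 0 ≤ ggap κ := by
    intro κ; rw [hgg]; exact Finset.sum_nonneg fun i _ => abs_nonneg _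
  have hggcont : Continuous ggap := by
    rw [hgg]
    apply continuous_finset_sum
    intro i _
    have h1 : Continuous fun κ => (p κ).coeff i := by
      simp only [hpdef]
      exact Stmt8Aux.continuous_coeff_charpoly hJcont i
    exact (h1.sub continuous_const).abs
  have hgg0 : ggap 0 = 0 := by rw [hgg]; simp
  obtain ⟨η, hηpos, hη⟩ := Metric.continuousAt_iff.mp hggcont.continuousAt ε hεpos
  refine ⟨min (η/2) (κhat/2), lt_min (by linarith) (by linarith), ?_⟩
  intro κ hκpos hκle μ hμroot
  have hκη : ggap κ < ε := by
    have hd : dist κ (0:ℝ) < η := by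
      rw [Real.dist_eq, sub_zero, abs_of_pos hκpos]
      have : κ ≤ η/2 := le_trans hκle (min_le_left _ _)
      linarith
    have := hη hd
    rwa [hgg0, Real.dist_eq, sub_zero, abs_of_nonneg (hggnonneg κ)] at this
  have hκκhat : κ < κhat := by
    have : κ ≤ κhat/2 := le_trans hκle (min_le_right _ _)
    linarith
  have hci : ∀ i, i ≤ n → |(p κ).coeff i - (p 0).coeff i| < ε := by
    intro i hi
    refine lt_of_le_of_lt ?_ hκη
    rw [hgg]
    exact Finset.single_le_sum (f := fun i => |(p κ).coeff i - (p 0).coeff i|)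
      (fun j _ => abs_nonneg _) (Finset.mem_range.mpr (by omega))
  have hμmem : μ ∈ (P κ).roots := by
    rw [mem_roots']
    refine ⟨hPne κ, ?_⟩
    rw [hPdef]; simp only
    rw [hpdef]; simp only
    rw [← hJfeq κ]
    exact hμroot
  have hcoeffP : ∀ i, (P κ).coeff i = ((p κ).coeff i : ℂ) := by
    intro i; rw [hPdef]; simp only [coeff_map]; rfl
  have hrootB : ∀ z ∈ (P κ).roots, ‖z‖ ≤ Bb := by
    intro z hz
    have hr := Stmt8Aux.root_norm_le (hPmonic κ) ((mem_roots'.mp hz).2)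
    rw [hPdeg κ] at hr
    refine le_trans hr ?_
    rw [hBb]
    have hbd : ∀ i ∈ Finset.range n, ‖(P κ).coeff i‖ ≤ |(p 0).coeff i| + 1 := by
      intro i hi
      rw [hcoeffP i, Complex.norm_real, Real.norm_eq_abs]
      have hd := hci i (le_of_lt (Finset.mem_range.mp hi))
      have h1 : |(p κ).coeff i| ≤ |(p 0).coeff i| + |(p κ).coeff i - (p 0).coeff i| := by
        have := abs_add_le ((p 0).coeff i) ((p κ).coeff i - (p 0).coeff i)
        simpa using this
      linarith
    have := Finset.sum_le_sum hbd
    linarith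
  have hpκ0 : 0 < (p κ).eval 0 := by
    have hd := hdet κ hκpos hκκhat
    rw [hpdef]; simp only
    rw [Stmt8Aux.eval_charpoly', zero_smul, zero_sub]
    rw [hJfeq κ] at hd
    exact hd
  -- near or far
  have hnf : ∀ z ∈ (P κ).roots, ‖z‖ ≤ δ ∨ ∃ r ∈ (P 0).roots, r ≠ 0 ∧ ‖z - r‖ ≤ δ := by
    intro z hz
    by_contra hcon
    push_neg at hcon
    obtain ⟨h1, h2⟩ := hcon
    have hfar : ∀ r ∈ (P 0).roots, δ ≤ ‖z - r‖ := by
      intro r hr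
      rcases eq_or_ne r 0 with h0 | h0
      · subst h0; rw [sub_zero]; exact le_of_lt h1
      · exact le_of_lt (h2 r hr h0)
    have hlow := Stmt8Aux.prod_lower (le_of_lt hδpos) z (P 0).roots hfar
    rw [hcard 0, ← hfact 0] at hlow
    have hzroot : (P κ).eval z = 0 := (mem_roots'.mp hz).2
    have hdiff : ‖(P 0).eval z - (P κ).eval z‖ ≤ ggap κ * Bb ^ n := by
      have heq : (P 0).eval z - (P κ).eval z
          = (((p 0) - (p κ)).map (algebraMap ℝ ℂ)).eval z := by
        rw [Polynomial.map_sub, eval_sub, hPdef]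
      rw [heq]
      have hqdeg : (((p 0) - (p κ)).map (algebraMap ℝ ℂ)).natDegree < n + 1 := by
        refine lt_of_le_of_lt natDegree_map_le ?_
        refine lt_of_le_of_lt (natDegree_sub_le _ _) ?_
        rw [hndeg 0, hndeg κ]; omega
      rw [eval_eq_sum_range' hqdeg]
      refine le_trans (norm_sum_le _ _) ?_
      have hstep : ∀ i ∈ Finset.range (n+1),
          ‖(((p 0) - (p κ)).map (algebraMap ℝ ℂ)).coeff i * z ^ i‖
            ≤ |(p κ).coeff i - (p 0).coeff i| * Bb ^ n := by
        intro i hi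
        have hi' := Finset.mem_range.mp hi
        rw [norm_mul, norm_pow]
        have hco : (((p 0) - (p κ)).map (algebraMap ℝ ℂ)).coeff i
            = (((p 0).coeff i - (p κ).coeff i : ℝ) : ℂ) := by
          simp [coeff_map, coeff_sub]
        rw [hco, Complex.norm_real, Real.norm_eq_abs, abs_sub_comm]
        have hzB : ‖z‖ ≤ Bb := hrootB z hz
        have h1 : ‖z‖ ^ i ≤ Bb ^ i := pow_le_pow_left₀ (norm_nonneg _) hzB i
        have h2 : Bb ^ i ≤ Bb ^ n :=
          pow_le_pow_right₀ hB1 (by omega : i ≤ n)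
        have h3 : (0:ℝ) ≤ |(p κ).coeff i - (p 0).coeff i| := abs_nonneg _
        nlinarith [pow_nonneg (norm_nonneg z) i]
      refine le_trans (Finset.sum_le_sum hstep) ?_
      rw [hgg, ← Finset.sum_mul]
    have hcontr : δ^n < δ^n := by
      calc δ^n ≤ ‖(P 0).eval z‖ := hlow
        _ = ‖(P 0).eval z - (P κ).eval z‖ := by rw [hzroot, sub_zero]
        _ ≤ ggap κ * Bb ^ n := hdiff
        _ < ε * Bb ^ n := by exact mul_lt_mul_of_pos_right hκη hBnpos
        _ ≤ (δ^n / (2 * Bb ^ n)) * Bb ^ n := mul_le_mul_of_nonneg_right hεδ (le_of_lt hBnpos)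
        _ = δ^n / 2 := by field_simp
        _ < δ^n := by
            have : (0:ℝ) < δ^n := pow_pos hδpos n
            linarith
    exact lt_irrefl _ hcontr
  set Near := (P κ).roots.filter (fun z => ‖z‖ ≤ δ) with hNear
  have hNearsub : Near ≤ (P κ).roots := Multiset.filter_le _ _
  have hNearδ : ∀ z ∈ Near, ‖z‖ ≤ δ := by
    intro z hz; rw [hNear] at hz; exact (Multiset.mem_filter.mp hz).2
  have hNearmem : ∀ z, z ∈ (P κ).roots → ‖z‖ ≤ δ → z ∈ Near := by
    intro z h1 h2; rw [hNear]; exact Multiset.mem_filter.mpr ⟨h1, h2⟩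
  have hNcard : Multiset.card Near ≤ 1 := by
    by_contra hcon
    push_neg at hcon
    obtain ⟨a, ha⟩ := Multiset.card_pos_iff_exists_mem.mp (show 0 < Multiset.card Near by omega)
    obtain ⟨b, hb⟩ := Multiset.card_pos_iff_exists_mem.mp
      (show 0 < Multiset.card (Near.erase a) by rw [Multiset.card_erase_of_mem ha, Nat.pred_eq_sub_one]; omega)
    have haR : a ∈ (P κ).roots := Multiset.mem_of_le hNearsub ha
    have haδ : ‖a‖ ≤ δ := hNearδ a ha
    have hbNear : b ∈ Near := Multiset.mem_of_mem_erase hb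
    have hbδ : ‖b‖ ≤ δ := hNearδ b hbNear
    have hbR : b ∈ (P κ).roots.erase a :=
      Multiset.mem_of_le (Multiset.erase_le_erase a hNearsub) hb
    set S := ((P κ).roots.erase a).erase b with hS
    have hroots_eq : (P κ).roots = a ::ₘ b ::ₘ S := by
      rw [hS, Multiset.cons_erase hbR, Multiset.cons_erase haR]
    have hSsub : S ≤ (P κ).roots := le_trans (Multiset.erase_le _ _) (Multiset.erase_le _ _)
    have hcardS : Multiset.card S + 2 = n := by
      have hcc := hcard κ
      rw [hroots_eq] at hcc
      simp only [Multiset.card_cons] at hcc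
      omega
    have hSB : ∀ r ∈ S, ‖r‖ ≤ Bb := fun r hr => hrootB r (Multiset.mem_of_le hSsub hr)
    obtain ⟨hh0, hh1⟩ := Stmt8Aux.prod_bounds hB1 S hSB
    have hfactκ : P κ = (X - Polynomial.C a) * ((X - Polynomial.C b) * ((S.map fun r => X - Polynomial.C r)).prod) := by
      conv_lhs => rw [hfact κ, hroots_eq]
      simp [Multiset.map_cons, Multiset.prod_cons]
    have hco1 : (P κ).coeff 1 = (derivative (P κ)).eval 0 := by
      rw [← coeff_zero_eq_eval_zero, coeff_derivative]
      norm_num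
    set hprod : ℂ[X] := ((S.map fun r => X - Polynomial.C r)).prod with hhp
    have hder : (derivative (P κ)).eval 0
        = (-b) * hprod.eval 0 + (-a) * (hprod.eval 0 + (-b) * (derivative hprod).eval 0) := by
      rw [hfactκ]
      simp only [derivative_mul, derivative_X_sub_C, one_mul, eval_add, eval_mul, eval_sub,
        eval_X, eval_C, zero_sub]
      try ring
    have hsn : Multiset.card S ≤ n := by omega
    have hpowS : Bb ^ Multiset.card S ≤ Bb ^ n := pow_le_pow_right₀ hB1 hsn
    have hnormbound : ‖(P κ).coeff 1‖ ≤ b0 / 8 := by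
      rw [hco1, hder]
      have e1 : ‖(-b) * hprod.eval 0‖ ≤ δ * Bb ^ n := by
        rw [norm_mul, norm_neg]
        have := mul_le_mul hbδ (le_trans hh0 hpowS) (norm_nonneg _) (le_of_lt hδpos)
        exact le_trans (mul_le_mul_of_nonneg_right le_rfl (norm_nonneg _)) this
      have e2 : ‖hprod.eval 0 + (-b) * (derivative hprod).eval 0‖
          ≤ Bb ^ n + δ * (n * Bb ^ n) := by
        refine le_trans (norm_add_le _ _) ?_
        rw [norm_mul, norm_neg]
        have i1 : ‖hprod.eval 0‖ ≤ Bb ^ n := le_trans hh0 hpowS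
        have i2 : ‖(derivative hprod).eval 0‖ ≤ n * Bb ^ n := by
          refine le_trans hh1 ?_
          have : (Multiset.card S : ℝ) ≤ n := by exact_mod_cast hsn
          have h0 : (0:ℝ) ≤ Bb ^ Multiset.card S := le_of_lt (pow_pos hBpos _)
          nlinarith
        have := mul_le_mul hbδ i2 (norm_nonneg _) (le_of_lt hδpos)
        linarith
      refine le_trans (norm_add_le _ _) ?_
      have e4 : ‖(-a) * (hprod.eval 0 + (-b) * (derivative hprod).eval 0)‖
          = ‖a‖ * ‖hprod.eval 0 + (-b) * (derivative hprod).eval 0‖ := by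
        rw [norm_mul, norm_neg]
      have e3 : ‖a‖ * ‖hprod.eval 0 + (-b) * (derivative hprod).eval 0‖
          ≤ δ * (Bb ^ n + δ * (n * Bb ^ n)) :=
        mul_le_mul haδ e2 (norm_nonneg _) (le_of_lt hδpos)
      have key : δ * Bb ^ n + δ * (Bb ^ n + δ * (n * Bb ^ n)) ≤ b0 / 8 := by
        have hδn : δ * (n * Bb ^ n) ≤ n * Bb ^ n := by
          have h0 : (0:ℝ) ≤ (n:ℝ) * Bb ^ n := mul_nonneg (Nat.cast_nonneg n) (le_of_lt hBnpos)
          nlinarith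
        have expand : δ * ((2 + n) * Bb ^ n) = 2 * (δ * Bb ^ n) + δ * (n * Bb ^ n) := by
          push_cast; ring
        have h2 : δ * (δ * (n * Bb ^ n)) ≤ δ * (n * Bb ^ n) := by
          nlinarith [mul_nonneg (le_of_lt hδpos) (mul_nonneg (Nat.cast_nonneg n : (0:ℝ) ≤ n) (le_of_lt hBnpos))]
        nlinarith [hδb]
      linarith [e1, e3, e4, key]
    have hlower : 3 * b0 / 4 ≤ ‖(P κ).coeff 1‖ := by
      rw [hcoeffP 1, Complex.norm_real, Real.norm_eq_abs]
      have hd := hci 1 hn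
      rw [hb0c] at hd
      have : b0 - b0/4 ≤ (p κ).coeff 1 := by
        have := abs_lt.mp hd
        linarith [hεb]
      have habs : (p κ).coeff 1 ≤ |(p κ).coeff 1| := le_abs_self _
      linarith
    linarith
  -- conclusion
  rcases hnf μ hμmem with hnear | ⟨r, hr, hr0, hrd⟩
  · -- near root: it is real and negative
    have hμN : μ ∈ Near := hNearmem μ hμmem hnear
    have hconjroot : (P κ).IsRoot ((starRingEnd ℂ) μ) :=
      Stmt8Aux.conj_root (p := p κ) ((mem_roots'.mp hμmem).2)
    have hconjN : (starRingEnd ℂ) μ ∈ Near := by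
      refine hNearmem _ (mem_roots'.mpr ⟨hPne κ, hconjroot⟩) ?_
      rw [RCLike.norm_conj]; exact hnear
    have hμconj : (starRingEnd ℂ) μ = μ := by
      by_contra hne
      have hmemerase : (starRingEnd ℂ) μ ∈ Near.erase μ :=
        (Multiset.mem_erase_of_ne hne).mpr hconjN
      have h1 : 0 < Multiset.card (Near.erase μ) :=
        Multiset.card_pos_iff_exists_mem.mpr ⟨_, hmemerase⟩
      have h2 := Multiset.card_erase_of_mem hμN
      rw [Nat.pred_eq_sub_one] at h2
      omega
    have him : μ.im = 0 := Complex.conj_eq_iff_im.mp hμconj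
    set t : ℝ := μ.re with htdef
    have hμt : μ = (t : ℂ) := by
      apply Complex.ext
      · simp [htdef]
      · simp [him]
    have hpt : (p κ).IsRoot t := by
      have h1 := (mem_roots'.mp hμmem).2
      rw [hμt] at h1
      rw [IsRoot] at h1 ⊢
      rw [hPdef] at h1; simp only at h1
      rw [Stmt8Aux.eval_ofReal] at h1
      exact_mod_cast h1
    have ht0 : t ≠ 0 := by
      intro h
      rw [h] at hpt
      exact (ne_of_gt hpκ0) hpt.symm.symm
    set gκ : ℝ[X] := (p κ) /ₘ (X - Polynomial.C t) with hgκdef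
    have hgκeq : (X - Polynomial.C t) * gκ = p κ := mul_divByMonic_eq_iff_isRoot.mpr hpt
    have hgκmonic : gκ.Monic :=
      (monic_X_sub_C t).of_mul_monic_left (by rw [hgκeq]; exact hmonic κ)
    clear_value gκ
    have hgκroots : ∀ s : ℝ, 0 ≤ s → ¬ gκ.IsRoot s := by
      intro s hs hgs
      have hpsκ : (p κ).IsRoot s := by
        rw [IsRoot, ← hgκeq, eval_mul, hgs.eq_zero, mul_zero]
      have hPsκ : ((s:ℂ)) ∈ (P κ).roots := by
        refine mem_roots'.mpr ⟨hPne κ, ?_⟩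
        rw [IsRoot, hPdef]; simp only
        rw [Stmt8Aux.eval_ofReal]
        exact_mod_cast hpsκ
      rcases hnf _ hPsκ with hnear2 | ⟨r, hrr, hrr0, hrrd⟩
      · have hsN : (s:ℂ) ∈ Near := hNearmem _ hPsκ hnear2
        have hst : (s:ℂ) = μ := by
          by_contra hne
          have hmemerase : (s:ℂ) ∈ Near.erase μ := (Multiset.mem_erase_of_ne hne).mpr hsN
          have h1 : 0 < Multiset.card (Near.erase μ) :=
            Multiset.card_pos_iff_exists_mem.mpr ⟨_, hmemerase⟩
          have h2 := Multiset.card_erase_of_mem hμN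
          rw [Nat.pred_eq_sub_one] at h2
          omega
        have hst' : s = t := by
          rw [hμt] at hst
          exact_mod_cast hst
        rw [hst'] at hgs hnear2 hPsκ
        obtain ⟨g2, hg2⟩ : (X - Polynomial.C t) ∣ gκ := dvd_iff_isRoot.mpr hgs
        have hdvd2 : (X - Polynomial.C t)^2 ∣ p κ := ⟨g2, by rw [← hgκeq, hg2]; ring⟩
        have hdvd2C : (X - Polynomial.C ((t:ℝ):ℂ))^2 ∣ P κ := by
          have h2 := map_dvd (mapRingHom (algebraMap ℝ ℂ)) hdvd2
          rw [hPdef]; simp only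
          simpa using h2
        have h2m : 2 ≤ rootMultiplicity ((t:ℂ)) (P κ) :=
          (le_rootMultiplicity_iff (hPne κ)).mpr hdvd2C
        have hcount : (P κ).roots.count ((t:ℂ)) = rootMultiplicity ((t:ℂ)) (P κ) :=
          count_roots _
        have hcountN : Near.count ((t:ℂ)) = (P κ).roots.count ((t:ℂ)) := by
          rw [hNear, Multiset.count_filter, if_pos hnear2]
        have hcc := Multiset.count_le_card ((t:ℂ)) Near
        omega
      · -- far: contradiction with s ≥ 0
        have h1 : |((s:ℂ) - r).re| ≤ ‖(s:ℂ) - r‖ := Complex.abs_re_le_norm _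
        have h2 := hc r hrr hrr0
        rw [Complex.sub_re, Complex.ofReal_re] at h1
        have h3 : s - r.re ≤ δ := le_trans (le_trans (le_abs_self _) h1) hrrd
        linarith [hcpos, hδc]
    have hgκ0 : 0 < gκ.eval 0 := Stmt8Aux.pos_of_no_nonneg_root hgκmonic hgκroots
    have hpeval : (p κ).eval 0 = (-t) * gκ.eval 0 := by
      rw [← hgκeq, eval_mul, eval_sub, eval_X, eval_C]
      ring
    have hgt : 0 < (-t) * gκ.eval 0 := by
      have h6 := hpκ0
      rw [hpeval] at h6
      exact h6
    have htneg : t < 0 := by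
      by_contra hge
      push_neg at hge
      have h7 : 0 ≤ t * gκ.eval 0 := mul_nonneg hge (le_of_lt hgκ0)
      rw [neg_mul] at hgt
      have h8 := neg_pos.mp hgt
      exact absurd h7 (not_le.mpr h8)
    exact htneg
  · -- far root
    have h1 : |(μ - r).re| ≤ ‖μ - r‖ := Complex.abs_re_le_norm _
    have h2 := hc r hr hr0
    rw [Complex.sub_re] at h1
    have h3 : μ.re - r.re ≤ δ := le_trans (le_trans (le_abs_self _) h1) hrd
    linarith [hcpos, hδc]
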